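/- arXiv:2104.03180 — 2 statements merged into one kernel-verified Lean document; each statement's English description precedes it below -/
import Mathlib

section
/- With σ the logistic sigmoid, define Π(μ,Σ) = ∫_ℝ σ(ξ) N(ξ|μ,Σ) dξ for μ ∈ ℝ and Σ > 0. Then: (i) for every fixed Σ > 0, the map μ ↦ Π(μ,Σ) is strictly increasing on ℝ; (ii) for every fixed μ > 0, the map Σ ↦ Π(μ,Σ) is strictly decreasing on (0,∞); (iii) for every fixed μ < 0, the map Σ ↦ Π(μ,Σ) is strictly increasing on (0,∞); and (iv) Π(0,Σ) = 1/2 for every Σ > 0. -/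
open MeasureTheory Real Set

/-- One-dimensional Gaussian density `N(ξ|μ,v) = (2πv)^{-1/2} exp(−(ξ−μ)²/(2v))`. -/
noncomputable def gaussPDF (μ v ξ : ℝ) : ℝ :=
  (Real.sqrt (2 * Real.pi * v))⁻¹ * Real.exp (-((ξ - μ) ^ 2) / (2 * v))

/-- The logistic sigmoid `σ(ξ) = 1/(1+e^{−ξ})`. -/
noncomputable def logistic (ξ : ℝ) : ℝ := 1 / (1 + Real.exp (-ξ))

/-- `Π(μ,v) = ∫_ℝ σ(ξ) N(ξ|μ,v) dξ`. -/
noncomputable def predPost (μ v : ℝ) : ℝ := ∫ ξ : ℝ, logistic ξ * gaussPDF μ v ξ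

section Aux

lemma logistic_pos (x : ℝ) : 0 < logistic x := by
  unfold logistic; positivity

lemma logistic_lt_one (x : ℝ) : logistic x < 1 := by
  unfold logistic
  rw [div_lt_one (by positivity)]
  linarith [Real.exp_pos (-x)]

lemma continuous_logistic : Continuous logistic := by
  unfold logistic
  exact continuous_const.div (by continuity) (fun x => by positivity)

lemma logistic_strictMono : StrictMono logistic := by
  intro a b hab
  unfold logistic
  apply one_div_lt_one_div_of_lt (by positivity)
  have : Real.exp (-b) < Real.exp (-a) := Real.exp_lt_exp.2 (by linarith)
  linarith

lemma logistic_add_logistic_neg (x : ℝ) : logistic x + logistic (-x) = 1 := by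
  unfold logistic
  rw [neg_neg, Real.exp_neg]
  have h := Real.exp_pos x
  field_simp
  ring

/-- Algebraic form of the symmetrized integrand. -/
lemma fold_eq (μ t : ℝ) :
    logistic (μ + t) + logistic (μ - t)
      = 1 + (Real.exp (2 * μ) - 1)
          / (1 + Real.exp (2 * μ) + 2 * Real.exp μ * Real.cosh t) := by
  have ha := Real.exp_pos μ
  have hb := Real.exp_pos t
  unfold logistic
  rw [Real.cosh_eq]
  have h1 : Real.exp (-(μ + t)) = (Real.exp μ * Real.exp t)⁻¹ := by
    rw [Real.exp_neg, Real.exp_add]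
  have h2 : Real.exp (-(μ - t)) = Real.exp t / Real.exp μ := by
    rw [neg_sub, Real.exp_sub]
  have h3 : Real.exp (2 * μ) = Real.exp μ * Real.exp μ := by
    rw [two_mul, Real.exp_add]
  rw [h1, h2, h3, Real.exp_neg t]
  set a := Real.exp μ
  set b := Real.exp t
  have hden : (0:ℝ) < 1 + a * a + 2 * a * ((b + b⁻¹) / 2) := by positivity
  field_simp
  ring

lemma exp_two_mul_pos_of_pos {μ : ℝ} (hμ : 0 < μ) : 0 < Real.exp (2 * μ) - 1 := by
  have : Real.exp 0 < Real.exp (2 * μ) := Real.exp_lt_exp.2 (by linarith)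
  rw [Real.exp_zero] at this; linarith

lemma exp_two_mul_neg_of_neg {μ : ℝ} (hμ : μ < 0) : Real.exp (2 * μ) - 1 < 0 := by
  have : Real.exp (2 * μ) < Real.exp 0 := Real.exp_lt_exp.2 (by linarith)
  rw [Real.exp_zero] at this; linarith

lemma fold_den_pos (μ t : ℝ) :
    0 < 1 + Real.exp (2 * μ) + 2 * Real.exp μ * Real.cosh t := by
  have h1 := Real.exp_pos (2 * μ)
  have h2 := Real.exp_pos μ
  have h3 := Real.cosh_pos t
  positivity

lemma fold_den_lt {μ t₁ t₂ : ℝ} (h : |t₁| < |t₂|) :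
    1 + Real.exp (2 * μ) + 2 * Real.exp μ * Real.cosh t₁
      < 1 + Real.exp (2 * μ) + 2 * Real.exp μ * Real.cosh t₂ := by
  have hc : Real.cosh t₁ < Real.cosh t₂ := Real.cosh_lt_cosh.2 h
  have h2 := Real.exp_pos μ
  nlinarith

/-- Strict decrease of the folded integrand (positive mean). -/
lemma fold_lt_fold_pos {μ : ℝ} (hμ : 0 < μ) {t₁ t₂ : ℝ} (h : |t₁| < |t₂|) :
    logistic (μ + t₂) + logistic (μ - t₂) < logistic (μ + t₁) + logistic (μ - t₁) := by
  rw [fold_eq, fold_eq]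
  have hnum := exp_two_mul_pos_of_pos hμ
  have hd1 := fold_den_pos μ t₁
  have hd2 := fold_den_pos μ t₂
  have hdl := fold_den_lt (μ := μ) h
  have : (Real.exp (2 * μ) - 1) / (1 + Real.exp (2 * μ) + 2 * Real.exp μ * Real.cosh t₂)
      < (Real.exp (2 * μ) - 1) / (1 + Real.exp (2 * μ) + 2 * Real.exp μ * Real.cosh t₁) := by
    rw [div_lt_div_iff₀ hd2 hd1]
    exact mul_lt_mul_of_pos_left hdl hnum
  linarith

/-- Strict increase of the folded integrand (negative mean). -/
lemma fold_lt_fold_neg {μ : ℝ} (hμ : μ < 0) {t₁ t₂ : ℝ} (h : |t₁| < |t₂|) :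
    logistic (μ + t₁) + logistic (μ - t₁) < logistic (μ + t₂) + logistic (μ - t₂) := by
  rw [fold_eq, fold_eq]
  have hnum := exp_two_mul_neg_of_neg hμ
  have hd1 := fold_den_pos μ t₁
  have hd2 := fold_den_pos μ t₂
  have hdl := fold_den_lt (μ := μ) h
  have : (Real.exp (2 * μ) - 1) / (1 + Real.exp (2 * μ) + 2 * Real.exp μ * Real.cosh t₁)
      < (Real.exp (2 * μ) - 1) / (1 + Real.exp (2 * μ) + 2 * Real.exp μ * Real.cosh t₂) := by
    rw [div_lt_div_iff₀ hd1 hd2]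
    exact mul_lt_mul_of_neg_left hdl hnum
  linarith

lemma gaussPDF_std (z : ℝ) :
    gaussPDF 0 1 z = (Real.sqrt (2 * π))⁻¹ * Real.exp (-(1/2) * z ^ 2) := by
  unfold gaussPDF
  rw [mul_one, sub_zero]
  congr 1
  ring

lemma gaussPDF_std_pos (z : ℝ) : 0 < gaussPDF 0 1 z := by
  rw [gaussPDF_std]
  have := Real.pi_pos
  positivity

lemma gaussPDF_std_even (z : ℝ) : gaussPDF 0 1 (-z) = gaussPDF 0 1 z := by
  rw [gaussPDF_std, gaussPDF_std, neg_pow]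
  ring_nf

lemma integrable_gaussPDF_std : Integrable (gaussPDF 0 1) := by
  have h : Integrable (fun z : ℝ => Real.exp (-(1/2) * z ^ 2)) :=
    integrable_exp_neg_mul_sq (by norm_num)
  have := h.const_mul (Real.sqrt (2 * π))⁻¹
  refine this.congr (Filter.Eventually.of_forall fun z => ?_)
  rw [gaussPDF_std]

lemma integral_gaussPDF_std : ∫ z : ℝ, gaussPDF 0 1 z = 1 := by
  simp_rw [gaussPDF_std]
  rw [MeasureTheory.integral_const_mul, integral_gaussian]
  rw [show π / (1/2 : ℝ) = 2 * π by ring]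
  have := Real.pi_pos
  exact inv_mul_cancel₀ (ne_of_gt (Real.sqrt_pos.2 (by positivity)))

lemma integrable_logistic_mul (c d : ℝ) :
    Integrable (fun z : ℝ => logistic (c + d * z) * gaussPDF 0 1 z) := by
  refine integrable_gaussPDF_std.bdd_mul (c := 1) ?_ (Filter.Eventually.of_forall fun x => ?_)
  · exact (continuous_logistic.comp (by continuity)).aestronglyMeasurable
  · rw [Real.norm_eq_abs, abs_of_pos (logistic_pos _)]
    exact (logistic_lt_one _).le

lemma integrable_fold (c d : ℝ) :
    Integrable (fun z : ℝ => (logistic (c + d * z) + logistic (c - d * z)) * gaussPDF 0 1 z) := by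
  have h1 := integrable_logistic_mul c d
  have h2 := integrable_logistic_mul c (-d)
  refine (h1.add h2).congr (Filter.Eventually.of_forall fun z => ?_)
  simp only [Pi.add_apply, neg_mul, ← sub_eq_add_neg]
  ring

/-- Change of variables: `Π(μ,v) = ∫ σ(μ+√v·z) φ(z) dz`. -/
lemma predPost_eq (μ v : ℝ) (hv : 0 < v) :
    predPost μ v = ∫ z : ℝ, logistic (μ + Real.sqrt v * z) * gaussPDF 0 1 z := by
  have hs : 0 < Real.sqrt v := Real.sqrt_pos.2 hv
  set s := Real.sqrt v with hsdef
  have hs2 : s ^ 2 = v := Real.sq_sqrt hv.le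
  have key : ∀ z : ℝ, logistic (μ + s * z) * gaussPDF 0 1 z
      = s * (logistic (s * z + μ) * gaussPDF μ v (s * z + μ)) := by
    intro z
    have hg : gaussPDF μ v (s * z + μ) = s⁻¹ * gaussPDF 0 1 z := by
      unfold gaussPDF
      rw [add_sub_cancel_right, sub_zero, mul_one]
      have h1 : (s * z) ^ 2 = v * z ^ 2 := by rw [mul_pow, hs2]
      have h2 : -(v * z ^ 2) / (2 * v) = -(z ^ 2) / 2 := by
        field_simp
      rw [h1, h2]
      rw [Real.sqrt_mul (by positivity : (0:ℝ) ≤ 2 * π) v, ← hsdef]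
      rw [mul_inv]
      ring
    rw [hg, add_comm (s * z) μ]
    field_simp
  rw [show (fun z : ℝ => logistic (μ + s * z) * gaussPDF 0 1 z)
      = fun z : ℝ => s * ((fun x : ℝ => logistic (x + μ) * gaussPDF μ v (x + μ)) (s * z))
      from funext key]
  rw [MeasureTheory.integral_const_mul,
    MeasureTheory.Measure.integral_comp_mul_left
      (fun x : ℝ => logistic (x + μ) * gaussPDF μ v (x + μ)) s,
    smul_eq_mul, abs_of_pos (inv_pos.2 hs), ← mul_assoc, mul_inv_cancel₀ (ne_of_gt hs), one_mul]
  rw [MeasureTheory.integral_add_right_eq_self (fun ξ : ℝ => logistic ξ * gaussPDF μ v ξ) μ]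
  rfl

/-- Symmetrized form of the predictive posterior. -/
lemma predPost_fold (μ v : ℝ) (hv : 0 < v) :
    predPost μ v = (1/2) * ∫ z : ℝ,
      (logistic (μ + Real.sqrt v * z) + logistic (μ - Real.sqrt v * z)) * gaussPDF 0 1 z := by
  set s := Real.sqrt v with hsdef
  have hneg : (∫ z : ℝ, logistic (μ + s * z) * gaussPDF 0 1 z)
      = ∫ z : ℝ, logistic (μ - s * z) * gaussPDF 0 1 z := by
    have h := MeasureTheory.Measure.integral_comp_mul_left
      (fun z : ℝ => logistic (μ + s * z) * gaussPDF 0 1 z) (-1)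
    simp only [neg_one_mul] at h
    rw [show (fun z : ℝ => logistic (μ + s * -z) * gaussPDF 0 1 (-z))
        = fun z : ℝ => logistic (μ - s * z) * gaussPDF 0 1 z from funext fun z => by
          rw [gaussPDF_std_even]; ring_nf] at h
    rw [h]
    norm_num
  have hsplit : (∫ z : ℝ, (logistic (μ + s * z) + logistic (μ - s * z)) * gaussPDF 0 1 z)
      = (∫ z : ℝ, logistic (μ + s * z) * gaussPDF 0 1 z)
        + ∫ z : ℝ, logistic (μ - s * z) * gaussPDF 0 1 z := by
    rw [← MeasureTheory.integral_add (integrable_logistic_mul μ s) ?h2]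
    · congr 1; funext z; ring
    · have := integrable_logistic_mul μ (-s)
      refine this.congr (Filter.Eventually.of_forall fun z => ?_)
      simp only [neg_mul, ← sub_eq_add_neg]
  rw [predPost_eq μ v hv, hsplit, ← hneg]
  ring

/-- Strict comparison of integrals from pointwise comparison off zero. -/
lemma integral_lt_integral_of {f g : ℝ → ℝ} (hf : Integrable f) (hg : Integrable g)
    (hle : ∀ x, f x ≤ g x) (hlt : ∀ x, x ≠ 0 → f x < g x) :
    (∫ x, f x) < ∫ x, g x := by
  have hsub : Integrable (fun x => g x - f x) := hg.sub hf
  have hpos : 0 < ∫ x, g x - f x := by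
    rw [MeasureTheory.integral_pos_iff_support_of_nonneg
      (fun x => sub_nonneg.2 (hle x)) hsub]
    have hsup : (Set.Ioi (0:ℝ)) ⊆ Function.support (fun x => g x - f x) := by
      intro x hx
      exact ne_of_gt (sub_pos.2 (hlt x (ne_of_gt hx)))
    calc (0 : ENNReal) < volume (Set.Ioi (0:ℝ)) := by simp [Real.volume_Ioi]
      _ ≤ _ := measure_mono hsup
  rw [MeasureTheory.integral_sub hg hf] at hpos
  linarith

end Aux

/-- Monotonicity of the logistic-likelihood predictive posterior probability:
(i) strictly increasing in `μ` for fixed `v > 0`;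
(ii) strictly decreasing in `v` on `(0,∞)` for fixed `μ > 0`;
(iii) strictly increasing in `v` on `(0,∞)` for fixed `μ < 0`;
(iv) `Π(0,v) = 1/2` for every `v > 0`. -/
theorem predPost_monotonicity :
    (∀ v : ℝ, 0 < v → StrictMono (fun μ : ℝ => predPost μ v)) ∧
    (∀ μ : ℝ, 0 < μ → StrictAntiOn (fun v : ℝ => predPost μ v) (Set.Ioi 0)) ∧
    (∀ μ : ℝ, μ < 0 → StrictMonoOn (fun v : ℝ => predPost μ v) (Set.Ioi 0)) ∧
    (∀ v : ℝ, 0 < v → predPost 0 v = 1 / 2) := by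
  refine ⟨?_, ?_, ?_, ?_⟩
  · -- (i)
    intro v hv μ₁ μ₂ h
    simp only
    rw [predPost_eq μ₁ v hv, predPost_eq μ₂ v hv]
    refine integral_lt_integral_of (integrable_logistic_mul μ₁ _) (integrable_logistic_mul μ₂ _)
      (fun z => ?_) (fun z _ => ?_)
    · exact mul_le_mul_of_nonneg_right
        (logistic_strictMono (by linarith)).le (gaussPDF_std_pos z).le
    · exact mul_lt_mul_of_pos_right
        (logistic_strictMono (by linarith)) (gaussPDF_std_pos z)
  · -- (ii)
    intro μ hμ v₁ hv₁ v₂ hv₂ h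
    simp only
    rw [predPost_fold μ v₁ hv₁, predPost_fold μ v₂ hv₂]
    have hs : Real.sqrt v₁ < Real.sqrt v₂ := Real.sqrt_lt_sqrt (le_of_lt hv₁) h
    have hs1 : 0 < Real.sqrt v₁ := Real.sqrt_pos.2 hv₁
    have habs : ∀ z : ℝ, z ≠ 0 → |Real.sqrt v₁ * z| < |Real.sqrt v₂ * z| := by
      intro z hz
      rw [abs_mul, abs_mul, abs_of_pos hs1, abs_of_pos (Real.sqrt_pos.2 hv₂)]
      exact mul_lt_mul_of_pos_right hs (abs_pos.2 hz)
    have hkey : ∀ z : ℝ, z ≠ 0 →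
        (logistic (μ + Real.sqrt v₂ * z) + logistic (μ - Real.sqrt v₂ * z)) * gaussPDF 0 1 z
        < (logistic (μ + Real.sqrt v₁ * z) + logistic (μ - Real.sqrt v₁ * z)) * gaussPDF 0 1 z :=
      fun z hz => mul_lt_mul_of_pos_right (fold_lt_fold_pos hμ (habs z hz)) (gaussPDF_std_pos z)
    have hle : ∀ z : ℝ,
        (logistic (μ + Real.sqrt v₂ * z) + logistic (μ - Real.sqrt v₂ * z)) * gaussPDF 0 1 z
        ≤ (logistic (μ + Real.sqrt v₁ * z) + logistic (μ - Real.sqrt v₁ * z)) * gaussPDF 0 1 z := by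
      intro z
      rcases eq_or_ne z 0 with rfl | hz
      · simp
      · exact (hkey z hz).le
    have := integral_lt_integral_of (integrable_fold μ (Real.sqrt v₂))
      (integrable_fold μ (Real.sqrt v₁)) hle hkey
    linarith
  · -- (iii)
    intro μ hμ v₁ hv₁ v₂ hv₂ h
    simp only
    rw [predPost_fold μ v₁ hv₁, predPost_fold μ v₂ hv₂]
    have hs : Real.sqrt v₁ < Real.sqrt v₂ := Real.sqrt_lt_sqrt (le_of_lt hv₁) h
    have hs1 : 0 < Real.sqrt v₁ := Real.sqrt_pos.2 hv₁
    have habs : ∀ z : ℝ, z ≠ 0 → |Real.sqrt v₁ * z| < |Real.sqrt v₂ * z| := by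
      intro z hz
      rw [abs_mul, abs_mul, abs_of_pos hs1, abs_of_pos (Real.sqrt_pos.2 hv₂)]
      exact mul_lt_mul_of_pos_right hs (abs_pos.2 hz)
    have hkey : ∀ z : ℝ, z ≠ 0 →
        (logistic (μ + Real.sqrt v₁ * z) + logistic (μ - Real.sqrt v₁ * z)) * gaussPDF 0 1 z
        < (logistic (μ + Real.sqrt v₂ * z) + logistic (μ - Real.sqrt v₂ * z)) * gaussPDF 0 1 z :=
      fun z hz => mul_lt_mul_of_pos_right (fold_lt_fold_neg hμ (habs z hz)) (gaussPDF_std_pos z)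
    have hle : ∀ z : ℝ,
        (logistic (μ + Real.sqrt v₁ * z) + logistic (μ - Real.sqrt v₁ * z)) * gaussPDF 0 1 z
        ≤ (logistic (μ + Real.sqrt v₂ * z) + logistic (μ - Real.sqrt v₂ * z)) * gaussPDF 0 1 z := by
      intro z
      rcases eq_or_ne z 0 with rfl | hz
      · simp
      · exact (hkey z hz).le
    have := integral_lt_integral_of (integrable_fold μ (Real.sqrt v₁))
      (integrable_fold μ (Real.sqrt v₂)) hle hkey
    linarith
  · -- (iv)
    intro v hv
    rw [predPost_fold 0 v hv]
    have : ∀ z : ℝ,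
        (logistic (0 + Real.sqrt v * z) + logistic (0 - Real.sqrt v * z)) * gaussPDF 0 1 z
        = gaussPDF 0 1 z := by
      intro z
      rw [zero_add, zero_sub, logistic_add_logistic_neg, one_mul]
    simp_rw [this]
    rw [integral_gaussPDF_std]
    norm_num
end

section
/- Let σ : ℝ → [0,1] be nondecreasing, let M be a positive integer, and let −∞ = c_0 < c_1 < … < c_{M−1} < c_M = +∞ determine intervals I_1 = (−∞, c_1], I_l = (c_{l−1}, c_l] for 1 < l < M, and I_M = (c_{M−1}, +∞). Let s_1 = 0 and s_l = σ(c_{l−1}) for l = 2,…,M, and assume that s_l ≤ σ(ξ) ≤ s_l + 1/M for all ξ ∈ I_l and all l. Then for every μ̄ ∈ ℝ, Σ̄ > 0 and every choice of μ_l ∈ ℝ, Σ_l > 0 (l = 1,…,M): | ∫_ℝ σ(ξ) N(ξ|μ̄,Σ̄) dξ − Σ_{l=1}^{M} s_l ∫_{I_l} N(ξ|μ_l,Σ_l) dξ | ≤ 1/M + Σ_{l=1}^{M} ∫_{I_l} | N(ξ|μ̄,Σ̄) − N(ξ|μ_l,Σ_l) | dξ. -/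
open MeasureTheory Real Set Finset

/-- The `l`-th discretisation interval of the latent space determined by the cut points
`c : ℕ → ℝ` (with `c_0 = −∞` and `c_M = +∞` interpreted implicitly):
`I_1 = (−∞, c_1]`, `I_l = (c_{l−1}, c_l]` for `1 < l < M`, and `I_M = (c_{M−1}, +∞)`. -/
def latentInterval (M : ℕ) (c : ℕ → ℝ) (l : ℕ) : Set ℝ :=
  {ξ : ℝ | (1 < l → c (l - 1) < ξ) ∧ (l < M → ξ ≤ c l)}

lemma gaussPDF_eq (μ v : ℝ) (hv : 0 ≤ v) :
    gaussPDF μ v = ProbabilityTheory.gaussianPDFReal μ ⟨v, hv⟩ := rfl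

lemma gaussPDF_nonneg (μ v ξ : ℝ) : 0 ≤ gaussPDF μ v ξ := by
  unfold gaussPDF; positivity

lemma gaussPDF_integrable (μ v : ℝ) (hv : 0 < v) : Integrable (gaussPDF μ v) := by
  rw [gaussPDF_eq μ v hv.le]
  exact ProbabilityTheory.integrable_gaussianPDFReal _ _

lemma gaussPDF_integral (μ v : ℝ) (hv : 0 < v) : ∫ ξ : ℝ, gaussPDF μ v ξ = 1 := by
  rw [gaussPDF_eq μ v hv.le]
  exact ProbabilityTheory.integral_gaussianPDFReal_eq_one μ (by
    intro h
    exact hv.ne' (congrArg Subtype.val h))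

lemma measurableSet_latentInterval (M : ℕ) (c : ℕ → ℝ) (l : ℕ) :
    MeasurableSet (latentInterval M c l) := by
  have h : latentInterval M c l
      = {ξ : ℝ | 1 < l → c (l - 1) < ξ} ∩ {ξ : ℝ | l < M → ξ ≤ c l} := rfl
  rw [h]
  refine MeasurableSet.inter ?_ ?_
  · by_cases h1 : 1 < l
    · simp only [h1, true_implies]
      exact measurableSet_Ioi
    · simp [h1]
  · by_cases h2 : l < M
    · simp only [h2, true_implies]
      exact measurableSet_Iic
    · simp [h2]

lemma latent_cover (M : ℕ) (hM : 0 < M) (c : ℕ → ℝ) :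
    ⋃ l ∈ Finset.Icc 1 M, latentInterval M c l = Set.univ := by
  classical
  ext ξ
  simp only [Set.mem_iUnion, Set.mem_univ, iff_true, exists_prop]
  by_cases hT : (Finset.filter (fun l => ξ ≤ c l) (Finset.Icc 1 (M - 1))).Nonempty
  · set T := Finset.filter (fun l => ξ ≤ c l) (Finset.Icc 1 (M - 1)) with hTdef
    set l := T.min' hT with hldef
    have hlT : l ∈ T := T.min'_mem hT
    rw [hTdef, Finset.mem_filter, Finset.mem_Icc] at hlT
    refine ⟨l, Finset.mem_Icc.2 ⟨hlT.1.1, by omega⟩, ?_, fun _ => hlT.2⟩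
    intro h1
    by_contra hcon
    push_neg at hcon
    have hmem : l - 1 ∈ T := by
      rw [hTdef, Finset.mem_filter, Finset.mem_Icc]
      exact ⟨⟨by omega, by omega⟩, hcon⟩
    have := T.min'_le _ hmem
    omega
  · refine ⟨M, Finset.mem_Icc.2 ⟨hM, le_refl _⟩, ?_, fun h => absurd h (lt_irrefl M)⟩
    intro h1
    by_contra hcon
    push_neg at hcon
    exact hT ⟨M - 1, by
      rw [Finset.mem_filter, Finset.mem_Icc]
      exact ⟨⟨by omega, le_refl _⟩, hcon⟩⟩

lemma latent_disjoint_lt (M : ℕ) (c : ℕ → ℝ) (hc : StrictMonoOn c (Set.Icc 1 (M - 1)))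
    {a b : ℕ} (ha : a ∈ Finset.Icc 1 M) (hb : b ∈ Finset.Icc 1 M) (hab : a < b) :
    Disjoint (latentInterval M c a) (latentInterval M c b) := by
  rw [Finset.mem_Icc] at ha hb
  rw [Set.disjoint_left]
  intro ξ hξa hξb
  have h1 : ξ ≤ c a := hξa.2 (lt_of_lt_of_le hab hb.2)
  have h2 : c (b - 1) < ξ := hξb.1 (lt_of_le_of_lt ha.1 hab)
  have h3 : c a ≤ c (b - 1) := by
    rcases eq_or_lt_of_le (Nat.le_sub_one_of_lt hab) with h | h
    · rw [h]
    · exact le_of_lt (hc ⟨ha.1, by omega⟩ ⟨by omega, by omega⟩ h)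
  linarith

lemma latent_disjoint (M : ℕ) (c : ℕ → ℝ) (hc : StrictMonoOn c (Set.Icc 1 (M - 1))) :
    Set.Pairwise ↑(Finset.Icc 1 M) (Function.onFun Disjoint (latentInterval M c)) := by
  intro a ha b hb hab
  rcases lt_trichotomy a b with h | h | h
  · exact latent_disjoint_lt M c hc ha hb h
  · exact absurd h hab
  · exact (latent_disjoint_lt M c hc hb ha h).symm

/-- Key discretisation estimate for the convergence of branch-and-bound: for a
nondecreasing link function `σ : ℝ → [0,1]`, a latent-space discretisation into `M`
intervals on each of which `σ` varies by at most `1/M`, and arbitrary Gaussian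
parameters `(μl l, vl l)` for each interval,
`|∫ σ(ξ) N(ξ|μ̄,v̄) dξ − Σ_l s_l ∫_{I_l} N(ξ|μl_l,vl_l) dξ|
  ≤ 1/M + Σ_l ∫_{I_l} |N(ξ|μ̄,v̄) − N(ξ|μl_l,vl_l)| dξ`. -/
theorem discretisation_error_bound (σ : ℝ → ℝ) (hσ_mono : Monotone σ)
    (hσ_range : ∀ ξ, σ ξ ∈ Set.Icc (0 : ℝ) 1)
    (M : ℕ) (hM : 0 < M) (c : ℕ → ℝ)
    (hc : StrictMonoOn c (Set.Icc 1 (M - 1)))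
    (s : ℕ → ℝ) (hs1 : s 1 = 0)
    (hsl : ∀ l, 2 ≤ l → l ≤ M → s l = σ (c (l - 1)))
    (hband : ∀ l ∈ Finset.Icc 1 M, ∀ ξ ∈ latentInterval M c l,
      s l ≤ σ ξ ∧ σ ξ ≤ s l + 1 / (M : ℝ))
    (μbar vbar : ℝ) (hvbar : 0 < vbar)
    (μl vl : ℕ → ℝ) (hvl : ∀ l, 0 < vl l) :
    |(∫ ξ : ℝ, σ ξ * gaussPDF μbar vbar ξ) -
        ∑ l ∈ Finset.Icc 1 M,
          s l * ∫ ξ in latentInterval M c l, gaussPDF (μl l) (vl l) ξ|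
      ≤ 1 / (M : ℝ) +
        ∑ l ∈ Finset.Icc 1 M,
          ∫ ξ in latentInterval M c l, |gaussPDF μbar vbar ξ - gaussPDF (μl l) (vl l) ξ| := by
  have hmeas : ∀ l, MeasurableSet (latentInterval M c l) :=
    measurableSet_latentInterval M c
  have hNbInt : Integrable (gaussPDF μbar vbar) := gaussPDF_integrable _ _ hvbar
  have hNlInt : ∀ l, Integrable (gaussPDF (μl l) (vl l)) :=
    fun l => gaussPDF_integrable _ _ (hvl l)
  have hσNb : Integrable (fun ξ => σ ξ * gaussPDF μbar vbar ξ) := by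
    refine hNbInt.bdd_mul hσ_mono.measurable.aestronglyMeasurable (c := 1) (ae_of_all _ fun x => ?_)
    rw [Real.norm_eq_abs, abs_le]
    exact ⟨by linarith [(hσ_range x).1], (hσ_range x).2⟩
  have hdisj := latent_disjoint M c hc
  have hsplit : ∀ f : ℝ → ℝ, Integrable f →
      ∫ ξ : ℝ, f ξ = ∑ l ∈ Finset.Icc 1 M, ∫ ξ in latentInterval M c l, f ξ := by
    intro f hf
    rw [← setIntegral_univ, ← latent_cover M hM c,
      integral_biUnion_finset _ (fun i _ => hmeas i) hdisj (fun i _ => hf.integrableOn)]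
  have hsum1 : ∑ l ∈ Finset.Icc 1 M, ∫ ξ in latentInterval M c l, gaussPDF μbar vbar ξ = 1 := by
    rw [← hsplit _ hNbInt, gaussPDF_integral _ _ hvbar]
  have key : ∀ l ∈ Finset.Icc 1 M,
      |(∫ ξ in latentInterval M c l, σ ξ * gaussPDF μbar vbar ξ) -
          s l * ∫ ξ in latentInterval M c l, gaussPDF (μl l) (vl l) ξ|
        ≤ (1 / (M : ℝ)) * (∫ ξ in latentInterval M c l, gaussPDF μbar vbar ξ) +
          ∫ ξ in latentInterval M c l,
            |gaussPDF μbar vbar ξ - gaussPDF (μl l) (vl l) ξ| := by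
    intro l hl
    have hlIcc := Finset.mem_Icc.1 hl
    have hs_mem : 0 ≤ s l ∧ s l ≤ 1 := by
      rcases eq_or_lt_of_le hlIcc.1 with h | h
      · rw [← h, hs1]; exact ⟨le_refl _, zero_le_one⟩
      · rw [hsl l h hlIcc.2]
        exact ⟨(hσ_range _).1, (hσ_range _).2⟩
    have e0 : ∫ ξ in latentInterval M c l, (σ ξ - s l) * gaussPDF μbar vbar ξ
        = (∫ ξ in latentInterval M c l, σ ξ * gaussPDF μbar vbar ξ)
          - s l * ∫ ξ in latentInterval M c l, gaussPDF μbar vbar ξ := by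
      simp_rw [sub_mul]
      rw [integral_sub hσNb.integrableOn ((hNbInt.integrableOn).const_mul (s l)),
        integral_const_mul _ _]
    have e1 : (∫ ξ in latentInterval M c l, σ ξ * gaussPDF μbar vbar ξ) -
          s l * ∫ ξ in latentInterval M c l, gaussPDF (μl l) (vl l) ξ
        = (∫ ξ in latentInterval M c l, (σ ξ - s l) * gaussPDF μbar vbar ξ) +
          s l * ((∫ ξ in latentInterval M c l, gaussPDF μbar vbar ξ) -
            ∫ ξ in latentInterval M c l, gaussPDF (μl l) (vl l) ξ) := by
      rw [e0]; ring
    rw [e1]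
    refine le_trans (abs_add_le _ _) (add_le_add ?_ ?_)
    · have hint1 : IntegrableOn (fun ξ => (σ ξ - s l) * gaussPDF μbar vbar ξ)
          (latentInterval M c l) := by
        simp_rw [sub_mul]
        exact hσNb.integrableOn.sub ((hNbInt.integrableOn).const_mul (s l))
      have h0 : 0 ≤ ∫ ξ in latentInterval M c l, (σ ξ - s l) * gaussPDF μbar vbar ξ :=
        setIntegral_nonneg (hmeas l) (fun ξ hξ =>
          mul_nonneg (sub_nonneg.2 (hband l hl ξ hξ).1) (gaussPDF_nonneg _ _ _))
      rw [abs_of_nonneg h0]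
      calc ∫ ξ in latentInterval M c l, (σ ξ - s l) * gaussPDF μbar vbar ξ
          ≤ ∫ ξ in latentInterval M c l, (1 / (M : ℝ)) * gaussPDF μbar vbar ξ := by
            refine setIntegral_mono_on hint1 ((hNbInt.integrableOn).const_mul _) (hmeas l)
              (fun ξ hξ => ?_)
            have := (hband l hl ξ hξ).2
            exact mul_le_mul_of_nonneg_right (by linarith) (gaussPDF_nonneg _ _ _)
        _ = (1 / (M : ℝ)) * ∫ ξ in latentInterval M c l, gaussPDF μbar vbar ξ :=
            integral_const_mul _ _
    · rw [abs_mul, abs_of_nonneg hs_mem.1,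
        ← integral_sub hNbInt.integrableOn (hNlInt l).integrableOn]
      have habs : |∫ ξ in latentInterval M c l,
            (gaussPDF μbar vbar ξ - gaussPDF (μl l) (vl l) ξ)|
          ≤ ∫ ξ in latentInterval M c l,
            |gaussPDF μbar vbar ξ - gaussPDF (μl l) (vl l) ξ| := by
        have := norm_integral_le_integral_norm
          (μ := volume.restrict (latentInterval M c l))
          (f := fun ξ => gaussPDF μbar vbar ξ - gaussPDF (μl l) (vl l) ξ)
        simpa [Real.norm_eq_abs] using this
      calc s l * |∫ ξ in latentInterval M c l,
            (gaussPDF μbar vbar ξ - gaussPDF (μl l) (vl l) ξ)|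
          ≤ 1 * ∫ ξ in latentInterval M c l,
            |gaussPDF μbar vbar ξ - gaussPDF (μl l) (vl l) ξ| :=
            mul_le_mul hs_mem.2 habs (abs_nonneg _) zero_le_one
        _ = _ := one_mul _
  rw [hsplit _ hσNb, ← Finset.sum_sub_distrib]
  refine le_trans (Finset.abs_sum_le_sum_abs _ _) ?_
  calc ∑ l ∈ Finset.Icc 1 M,
        |(∫ ξ in latentInterval M c l, σ ξ * gaussPDF μbar vbar ξ) -
          s l * ∫ ξ in latentInterval M c l, gaussPDF (μl l) (vl l) ξ|
      ≤ ∑ l ∈ Finset.Icc 1 M,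
        ((1 / (M : ℝ)) * (∫ ξ in latentInterval M c l, gaussPDF μbar vbar ξ) +
          ∫ ξ in latentInterval M c l,
            |gaussPDF μbar vbar ξ - gaussPDF (μl l) (vl l) ξ|) :=
        Finset.sum_le_sum key
    _ = (1 / (M : ℝ)) *
          (∑ l ∈ Finset.Icc 1 M, ∫ ξ in latentInterval M c l, gaussPDF μbar vbar ξ) +
        ∑ l ∈ Finset.Icc 1 M,
          ∫ ξ in latentInterval M c l,
            |gaussPDF μbar vbar ξ - gaussPDF (μl l) (vl l) ξ| := by
        rw [Finset.sum_add_distrib, Finset.mul_sum]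
    _ = _ := by rw [hsum1, mul_one]
end
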